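/- Define I(T) = ∫₀^T ∫₀^t ∫₀^∞ e^{−r² t/2} e^{−r² s/2} e^{−r(t − s)} r dr ds dt for T > 0. Then for every ε with 0 < ε < 2 one has I(T) ≤ −2T log(1 − ε/2) + 3 ε^{−2}. -/

import Mathlib

open MeasureTheory Real

/-- `I T = ∫₀^T ∫₀^t ∫₀^∞ e^{-r²t/2} e^{-r²s/2} e^{-r(t-s)} r dr ds dt`. -/
noncomputable def Iint (T : ℝ) : ℝ :=
  ∫ t in Set.Ioc (0 : ℝ) T, ∫ s in Set.Ioc (0 : ℝ) t, ∫ r in Set.Ioi (0 : ℝ),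
    Real.exp (-(r ^ 2 * t / 2)) * Real.exp (-(r ^ 2 * s / 2)) *
      Real.exp (-(r * (t - s))) * r

section AuxIntegrals

/-- Gaussian moment integral: `∫₀^∞ e^{-c r²} r dr = 1/(2c)`. -/
lemma integral_exp_sq_aux (c : ℝ) (hc : 0 < c) :
    ∫ r in Set.Ioi (0:ℝ), Real.exp (-(c * r ^ 2)) * r = (2 * c)⁻¹ := by
  have hderiv : ∀ x ∈ Set.Ici (0:ℝ),
      HasDerivAt (fun x : ℝ => -(2*c)⁻¹ * Real.exp (-(c * x ^ 2)))
        (Real.exp (-(c * x ^ 2)) * x) x := by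
    intro x _
    have h1 : HasDerivAt (fun x : ℝ => -(c * x ^ 2)) (-(c * (2 * x))) x := by
      simpa [Pi.neg_def] using ((hasDerivAt_pow 2 x).const_mul c).neg
    have h2 := (h1.exp).const_mul (-(2*c)⁻¹)
    refine h2.congr_deriv ?_
    field_simp
  have hint : IntegrableOn (fun x : ℝ => Real.exp (-(c * x ^ 2)) * x) (Set.Ioi 0) := by
    have := integrableOn_rpow_mul_exp_neg_mul_sq hc (s := 1) (by norm_num)
    refine this.congr_fun (fun x hx => ?_) measurableSet_Ioi
    dsimp only
    rw [Real.rpow_one, neg_mul, mul_comm]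
  have htend : Filter.Tendsto (fun x : ℝ => -(2*c)⁻¹ * Real.exp (-(c * x ^ 2)))
      Filter.atTop (nhds 0) := by
    rw [show (0:ℝ) = -(2*c)⁻¹ * 0 by ring]
    refine Filter.Tendsto.const_mul _ (Real.tendsto_exp_atBot.comp ?_)
    have h1 : Filter.Tendsto (fun x : ℝ => c * x ^ 2) Filter.atTop Filter.atTop :=
      (Filter.tendsto_pow_atTop two_ne_zero).const_mul_atTop hc
    exact Filter.tendsto_neg_atBot_iff.mpr h1
  have := MeasureTheory.integral_Ioi_of_hasDerivAt_of_tendsto' hderiv hint htend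
  rw [this]
  norm_num

lemma integrableOn_exp_sq_aux (c : ℝ) (hc : 0 < c) :
    IntegrableOn (fun x : ℝ => Real.exp (-(c * x ^ 2)) * x) (Set.Ioi 0) := by
  have := integrableOn_rpow_mul_exp_neg_mul_sq hc (s := 1) (by norm_num)
  refine this.congr_fun (fun x hx => ?_) measurableSet_Ioi
  dsimp only
  rw [Real.rpow_one, neg_mul, mul_comm]

/-- Exponential moment integral: `∫₀^∞ e^{-u r} r dr = 1/u²`. -/
lemma integral_exp_lin_aux (u : ℝ) (hu : 0 < u) :
    ∫ r in Set.Ioi (0:ℝ), Real.exp (-(u * r)) * r = (u ^ 2)⁻¹ := by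
  have h := Real.integral_rpow_mul_exp_neg_mul_Ioi (a := 2) (by norm_num) hu
  have h2 : ∫ r in Set.Ioi (0:ℝ), Real.exp (-(u * r)) * r
      = ∫ t in Set.Ioi (0:ℝ), t ^ ((2:ℝ) - 1) * Real.exp (-(u * t)) := by
    refine setIntegral_congr_fun measurableSet_Ioi (fun x hx => ?_)
    rw [show (2:ℝ) - 1 = 1 by norm_num, Real.rpow_one, mul_comm]
  rw [h2, h, Real.Gamma_two, mul_one]
  rw [show ((1:ℝ)/u) ^ (2:ℝ) = ((1:ℝ)/u) ^ (2:ℕ) by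
    rw [← Real.rpow_natCast (1/u) 2]; norm_num]
  rw [div_pow, one_pow, one_div]

lemma integrableOn_exp_lin_aux (u : ℝ) (hu : 0 < u) :
    IntegrableOn (fun r : ℝ => Real.exp (-(u * r)) * r) (Set.Ioi 0) := by
  have hderiv : ∀ x ∈ Set.Ici (0:ℝ),
      HasDerivAt (fun x : ℝ => -(x * u + 1) / u ^ 2 * Real.exp (-(u * x)))
        (Real.exp (-(u * x)) * x) x := by
    intro x _
    have h1 : HasDerivAt (fun x : ℝ => -(u * x)) (-u) x := by
      simpa [Pi.neg_def] using ((hasDerivAt_id x).const_mul u).neg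
    have hlin : HasDerivAt (fun x : ℝ => -(x * u + 1) / u ^ 2) (-u / u ^ 2) x := by
      simpa using (((hasDerivAt_id x).mul_const u).add_const 1).neg.div_const (u ^ 2)
    have h2 := hlin.mul h1.exp
    refine h2.congr_deriv ?_
    field_simp
    ring
  have htend : Filter.Tendsto (fun x : ℝ => -(x * u + 1) / u ^ 2 * Real.exp (-(u * x)))
      Filter.atTop (nhds 0) := by
    have h1 := tendsto_rpow_mul_exp_neg_mul_atTop_nhds_zero 1 u hu
    have h2 : Filter.Tendsto (fun x : ℝ => Real.exp (-u * x)) Filter.atTop (nhds 0) := by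
      simpa using tendsto_rpow_mul_exp_neg_mul_atTop_nhds_zero 0 u hu
    have h3 := (h1.const_mul (-(1:ℝ)/u)).add (h2.const_mul (-(1:ℝ)/u^2))
    rw [show (-(1:ℝ)/u) * 0 + (-(1:ℝ)/u^2) * 0 = 0 by ring] at h3
    refine h3.congr' ?_
    filter_upwards [Filter.eventually_gt_atTop (0:ℝ)] with x hx
    rw [Real.rpow_one]
    rw [show -u * x = -(u * x) by ring]
    field_simp
    ring
  exact integrableOn_Ioi_deriv_of_nonneg' hderiv
    (fun x hx => mul_nonneg (Real.exp_nonneg _) (le_of_lt hx)) htend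

end AuxIntegrals

/-- The innermost integral. -/
noncomputable def Kint (t s : ℝ) : ℝ :=
  ∫ r in Set.Ioi (0 : ℝ), Real.exp (-(r ^ 2 * t / 2)) * Real.exp (-(r ^ 2 * s / 2)) *
      Real.exp (-(r * (t - s))) * r

lemma Kint_nonneg (t s : ℝ) : 0 ≤ Kint t s := by
  refine integral_nonneg_of_ae ?_
  filter_upwards [ae_restrict_mem measurableSet_Ioi] with r hr
  have hr' : (0:ℝ) < r := hr
  exact mul_nonneg (by positivity) hr'.le

lemma Kint_le_one (t s : ℝ) (ht : 0 < t) (hs : 0 ≤ s) (hst : s ≤ t) :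
    Kint t s ≤ (t + s)⁻¹ := by
  have hc : 0 < (t + s) / 2 := by linarith
  have hval := integral_exp_sq_aux ((t + s) / 2) hc
  have hb : (2 * ((t + s) / 2))⁻¹ = (t + s)⁻¹ := by
    rw [mul_div_cancel₀]; norm_num
  rw [← hb, ← hval]
  refine integral_mono_of_nonneg ?_ (integrableOn_exp_sq_aux _ hc) ?_
  · filter_upwards [ae_restrict_mem measurableSet_Ioi] with r hr
    have hr' : (0:ℝ) < r := hr
    exact mul_nonneg (by positivity) hr'.le
  · filter_upwards [ae_restrict_mem measurableSet_Ioi] with r hr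
    have hr' : (0:ℝ) < r := hr
    have e1 : Real.exp (-(r ^ 2 * t / 2)) * Real.exp (-(r ^ 2 * s / 2))
        = Real.exp (-((t + s) / 2 * r ^ 2)) := by
      rw [← Real.exp_add]; ring_nf
    have e2 : Real.exp (-(r * (t - s))) ≤ 1 :=
      Real.exp_le_one_iff.mpr (by nlinarith)
    calc Real.exp (-(r ^ 2 * t / 2)) * Real.exp (-(r ^ 2 * s / 2)) *
          Real.exp (-(r * (t - s))) * r
        ≤ Real.exp (-(r ^ 2 * t / 2)) * Real.exp (-(r ^ 2 * s / 2)) * 1 * r :=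
          mul_le_mul_of_nonneg_right (mul_le_mul_of_nonneg_left e2 (by positivity)) hr'.le
      _ = Real.exp (-((t + s) / 2 * r ^ 2)) * r := by rw [mul_one, e1]

lemma Kint_le_two (t s : ℝ) (ht : 0 ≤ t) (hs : 0 ≤ s) (hst : s < t) :
    Kint t s ≤ ((t - s) ^ 2)⁻¹ := by
  have hu : 0 < t - s := by linarith
  have hval := integral_exp_lin_aux (t - s) hu
  rw [← hval]
  refine integral_mono_of_nonneg ?_ (integrableOn_exp_lin_aux _ hu) ?_
  · filter_upwards [ae_restrict_mem measurableSet_Ioi] with r hr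
    have hr' : (0:ℝ) < r := hr
    exact mul_nonneg (by positivity) hr'.le
  · filter_upwards [ae_restrict_mem measurableSet_Ioi] with r hr
    have hr' : (0:ℝ) < r := hr
    have e1 : Real.exp (-(r ^ 2 * t / 2)) ≤ 1 := Real.exp_le_one_iff.mpr (by nlinarith)
    have e2 : Real.exp (-(r ^ 2 * s / 2)) ≤ 1 := Real.exp_le_one_iff.mpr (by nlinarith)
    have e12 : Real.exp (-(r ^ 2 * t / 2)) * Real.exp (-(r ^ 2 * s / 2)) ≤ 1 := by
      nlinarith [Real.exp_nonneg (-(r ^ 2 * t / 2)), Real.exp_nonneg (-(r ^ 2 * s / 2))]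
    have e3 : Real.exp (-(r * (t - s))) = Real.exp (-((t - s) * r)) := by ring_nf
    calc Real.exp (-(r ^ 2 * t / 2)) * Real.exp (-(r ^ 2 * s / 2)) *
          Real.exp (-(r * (t - s))) * r
        ≤ 1 * Real.exp (-(r * (t - s))) * r :=
          mul_le_mul_of_nonneg_right
            (mul_le_mul_of_nonneg_right e12 (Real.exp_nonneg _)) hr'.le
      _ = Real.exp (-((t - s) * r)) * r := by rw [one_mul, e3]

/-- `∫ s in Ioc b c, (t+s)⁻¹ = log ((t+c)/(t+b))`. -/
lemma integral_inv_shift (t b c : ℝ) (htb : 0 < t + b) (hbc : b ≤ c) :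
    ∫ s in Set.Ioc b c, (t + s)⁻¹ = Real.log ((t + c) / (t + b)) := by
  rw [← intervalIntegral.integral_of_le hbc,
    intervalIntegral.integral_comp_add_left (fun x => x⁻¹) t]
  exact integral_inv (Set.notMem_uIcc_of_lt htb (by linarith))

lemma integral_invsq_shift (t a : ℝ) (ha : 0 < a) (hat : a ≤ t) :
    ∫ s in Set.Ioc 0 (t - a), ((t - s) ^ 2)⁻¹ = a⁻¹ - t⁻¹ := by
  rw [← intervalIntegral.integral_of_le (by linarith),
    intervalIntegral.integral_comp_sub_left (fun x => (x ^ 2)⁻¹) t]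
  have h0 : t - (t - a) = a := by ring
  have h1 : t - 0 = t := by ring
  rw [h0, h1]
  have heq : (fun x : ℝ => (x ^ 2)⁻¹) = fun x : ℝ => x ^ (-2 : ℤ) := by
    funext x
    rw [zpow_neg]
    norm_cast
  rw [heq, integral_zpow (Or.inr ⟨by norm_num,
    Set.notMem_uIcc_of_lt ha (lt_of_lt_of_le ha hat)⟩)]
  norm_num
  ring

lemma integrableOn_inv_shift (t b c : ℝ) (htb : 0 < t + b) :
    IntegrableOn (fun s : ℝ => (t + s)⁻¹) (Set.Ioc b c) := by
  have hcont : ContinuousOn (fun s : ℝ => (t + s)⁻¹) (Set.Icc b c) := by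
    refine ContinuousOn.inv₀ (by fun_prop) (fun s hs => ?_)
    have h1 := hs.1
    have : 0 < t + s := by linarith
    exact ne_of_gt this
  exact (hcont.integrableOn_Icc).mono_set Set.Ioc_subset_Icc_self

lemma F_le_log2 (t : ℝ) (ht : 0 < t) :
    (∫ s in Set.Ioc (0:ℝ) t, Kint t s) ≤ Real.log 2 := by
  have hb : 0 < t + 0 := by linarith
  have hle : (∫ s in Set.Ioc (0:ℝ) t, Kint t s) ≤ ∫ s in Set.Ioc (0:ℝ) t, (t + s)⁻¹ := by
    refine integral_mono_of_nonneg ?_ (integrableOn_inv_shift t 0 t hb) ?_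
    · filter_upwards with s using Kint_nonneg t s
    · filter_upwards [ae_restrict_mem measurableSet_Ioc] with s hs
      exact Kint_le_one t s ht hs.1.le hs.2
  refine hle.trans ?_
  rw [integral_inv_shift t 0 t hb ht.le, show (t + t) / (t + 0) = 2 by
    rw [add_zero]; field_simp; ring]

lemma F_le_far (t : ℝ) (ht : 2 ≤ t) :
    (∫ s in Set.Ioc (0:ℝ) t, Kint t s) ≤ Real.sqrt 2 * (Real.sqrt t)⁻¹ := by
  have ht0 : (0:ℝ) < t := by linarith
  set a := Real.sqrt (2 * t) with ha_def
  have ha2 : a ^ 2 = 2 * t := Real.sq_sqrt (by linarith)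
  have ha0 : 0 ≤ a := Real.sqrt_nonneg _
  have haa : 2 ≤ a := by nlinarith
  have hat : a ≤ t := by nlinarith
  have h0ta : 0 ≤ t - a := by linarith
  have hunion : Set.Ioc (0:ℝ) (t - a) ∪ Set.Ioc (t - a) t = Set.Ioc (0:ℝ) t :=
    Set.Ioc_union_Ioc_eq_Ioc h0ta (by linarith)
  set g : ℝ → ℝ := fun s => if s ≤ t - a then ((t - s) ^ 2)⁻¹ else (t + s)⁻¹ with hg_def
  have i1 : IntegrableOn g (Set.Ioc 0 (t - a)) := by
    have hcont : ContinuousOn (fun s : ℝ => ((t - s) ^ 2)⁻¹) (Set.Icc 0 (t - a)) := by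
      refine ContinuousOn.inv₀ (by fun_prop) (fun s hs => ?_)
      have h1 : s ≤ t - a := hs.2
      have h2 : 0 < t - s := by linarith
      positivity
    refine ((hcont.integrableOn_Icc).mono_set Set.Ioc_subset_Icc_self).congr_fun
      (fun s hs => ?_) measurableSet_Ioc
    simp only [hg_def, if_pos hs.2]
  have i2 : IntegrableOn g (Set.Ioc (t - a) t) := by
    refine ((integrableOn_inv_shift t (t - a) t (by linarith))).congr_fun
      (fun s hs => ?_) measurableSet_Ioc
    simp only [hg_def, if_neg (not_le.mpr hs.1)]
  have hg_int : IntegrableOn g (Set.Ioc (0:ℝ) t) := by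
    rw [← hunion]; exact i1.union i2
  have hle : (∫ s in Set.Ioc (0:ℝ) t, Kint t s) ≤ ∫ s in Set.Ioc (0:ℝ) t, g s := by
    refine integral_mono_of_nonneg ?_ hg_int ?_
    · filter_upwards with s using Kint_nonneg t s
    · filter_upwards [ae_restrict_mem measurableSet_Ioc] with s hs
      by_cases hcase : s ≤ t - a
      · simp only [hg_def, if_pos hcase]
        exact Kint_le_two t s ht0.le hs.1.le (by linarith)
      · simp only [hg_def, if_neg hcase]
        exact Kint_le_one t s ht0 hs.1.le hs.2
  have hsplit : ∫ s in Set.Ioc (0:ℝ) t, g s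
      = (∫ s in Set.Ioc (0:ℝ) (t - a), g s) + ∫ s in Set.Ioc (t - a) t, g s := by
    rw [← hunion, setIntegral_union (Set.Ioc_disjoint_Ioc_of_le le_rfl) measurableSet_Ioc i1 i2]
  have hval1 : ∫ s in Set.Ioc (0:ℝ) (t - a), g s = a⁻¹ - t⁻¹ := by
    rw [setIntegral_congr_fun measurableSet_Ioc
      (fun s hs => by simp only [hg_def, if_pos hs.2] : Set.EqOn g (fun s => ((t - s) ^ 2)⁻¹) _)]
    exact integral_invsq_shift t a (by linarith) hat
  have hval2 : ∫ s in Set.Ioc (t - a) t, g s = Real.log ((t + t) / (t + (t - a))) := by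
    rw [setIntegral_congr_fun measurableSet_Ioc
      (fun s hs => by simp only [hg_def, if_neg (not_le.mpr hs.1)] :
        Set.EqOn g (fun s => (t + s)⁻¹) _)]
    exact integral_inv_shift t (t - a) t (by linarith) (by linarith)
  have hlog : Real.log ((t + t) / (t + (t - a))) ≤ 1 / (a - 1) := by
    have hpos : 0 < (t + t) / (t + (t - a)) := by
      apply div_pos <;> linarith
    refine (Real.log_le_sub_one_of_pos hpos).trans ?_
    have h2ta : t + (t - a) = a ^ 2 - a := by nlinarith
    have htt : t + t = a ^ 2 := by nlinarith
    rw [h2ta, htt]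
    have ha1 : (0:ℝ) < a - 1 := by linarith
    have hden : (0:ℝ) < a ^ 2 - a := by nlinarith
    rw [div_sub_one (ne_of_gt hden), div_le_div_iff₀ hden ha1]
    nlinarith
  have htarget : Real.sqrt 2 * (Real.sqrt t)⁻¹ = 2 / a := by
    have h1 : a = Real.sqrt 2 * Real.sqrt t := by
      rw [ha_def, Real.sqrt_mul (by norm_num) t]
    have h2 : (0:ℝ) < Real.sqrt 2 := Real.sqrt_pos.mpr (by norm_num)
    have h3 : (0:ℝ) < Real.sqrt t := Real.sqrt_pos.mpr ht0
    have h4 : Real.sqrt 2 * Real.sqrt 2 = 2 := Real.mul_self_sqrt (by norm_num)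
    rw [h1]
    field_simp
    nlinarith
  have hfinal : a⁻¹ - t⁻¹ + 1 / (a - 1) ≤ 2 / a := by
    have htt : t = a ^ 2 / 2 := by nlinarith
    have ha1 : (0:ℝ) < a - 1 := by linarith
    have hap : (0:ℝ) < a := by linarith
    rw [htt]
    have expand : 2 / a - (a⁻¹ - (a ^ 2 / 2)⁻¹ + 1 / (a - 1)) = (a - 2) / (a ^ 2 * (a - 1)) := by
      field_simp
      ring
    have hnn : 0 ≤ (a - 2) / (a ^ 2 * (a - 1)) :=
      div_nonneg (by linarith) (by positivity)
    linarith
  calc (∫ s in Set.Ioc (0:ℝ) t, Kint t s) ≤ _ := hle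
    _ = _ := hsplit
    _ ≤ a⁻¹ - t⁻¹ + 1 / (a - 1) := by rw [hval1, hval2]; linarith [hlog]
    _ ≤ 2 / a := hfinal
    _ = Real.sqrt 2 * (Real.sqrt t)⁻¹ := htarget.symm

lemma Iint_eq (T : ℝ) : Iint T = ∫ t in Set.Ioc (0:ℝ) T, ∫ s in Set.Ioc (0:ℝ) t, Kint t s := rfl

lemma Iint_le_log2 (T : ℝ) (hT : 0 < T) : Iint T ≤ T * Real.log 2 := by
  rw [Iint_eq]
  have h : (∫ t in Set.Ioc (0:ℝ) T, ∫ s in Set.Ioc (0:ℝ) t, Kint t s)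
      ≤ ∫ _t in Set.Ioc (0:ℝ) T, Real.log 2 := by
    refine integral_mono_of_nonneg ?_ ?_ ?_
    · filter_upwards with t
      exact integral_nonneg fun s => Kint_nonneg t s
    · exact integrableOn_const measure_Ioc_lt_top.ne
    · filter_upwards [ae_restrict_mem measurableSet_Ioc] with t ht
      exact F_le_log2 t ht.1
  refine h.trans ?_
  rw [setIntegral_const, Real.volume_real_Ioc_of_le hT.le, smul_eq_mul]
  rw [sub_zero]

lemma Iint_le_sqrt (T : ℝ) (hT : 0 < T) : Iint T ≤ 2 * Real.sqrt 2 * Real.sqrt T := by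
  rw [Iint_eq]
  have hint : IntegrableOn (fun t : ℝ => Real.sqrt 2 * (Real.sqrt t)⁻¹) (Set.Ioc 0 T) := by
    have h1 : IntervalIntegrable (fun x : ℝ => x ^ (-(1/2) : ℝ)) volume 0 T :=
      intervalIntegral.intervalIntegrable_rpow' (by norm_num)
    rw [intervalIntegrable_iff_integrableOn_Ioc_of_le hT.le] at h1
    have h2 : IntegrableOn (fun x : ℝ => Real.sqrt 2 * x ^ (-(1/2) : ℝ)) (Set.Ioc 0 T) :=
      h1.const_mul (Real.sqrt 2)
    refine h2.congr_fun (fun x hx => ?_) measurableSet_Ioc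
    have hx0 : (0:ℝ) < x := hx.1
    dsimp only
    rw [Real.rpow_neg hx0.le, ← Real.sqrt_eq_rpow]
  have h : (∫ t in Set.Ioc (0:ℝ) T, ∫ s in Set.Ioc (0:ℝ) t, Kint t s)
      ≤ ∫ t in Set.Ioc (0:ℝ) T, Real.sqrt 2 * (Real.sqrt t)⁻¹ := by
    refine integral_mono_of_nonneg ?_ hint ?_
    · filter_upwards with t
      exact integral_nonneg fun s => Kint_nonneg t s
    · filter_upwards [ae_restrict_mem measurableSet_Ioc] with t ht
      rcases le_or_gt 2 t with hc | hc
      · exact F_le_far t hc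
      · refine (F_le_log2 t ht.1).trans ?_
        have h1 : Real.log 2 ≤ 1 := by
          have := Real.log_le_sub_one_of_pos (by norm_num : (0:ℝ) < 2)
          linarith
        have h2 : (0:ℝ) < Real.sqrt t := Real.sqrt_pos.mpr ht.1
        have h3 : Real.sqrt t ≤ Real.sqrt 2 := Real.sqrt_le_sqrt hc.le
        have h4 : (1:ℝ) = Real.sqrt t * (Real.sqrt t)⁻¹ := (mul_inv_cancel₀ h2.ne').symm
        refine h1.trans ?_
        rw [h4]
        exact mul_le_mul_of_nonneg_right h3 (by positivity)
  refine h.trans ?_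
  rw [integral_const_mul]
  have hval : ∫ t in Set.Ioc (0:ℝ) T, (Real.sqrt t)⁻¹ = 2 * Real.sqrt T := by
    have hcong : ∫ t in Set.Ioc (0:ℝ) T, (Real.sqrt t)⁻¹
        = ∫ t in Set.Ioc (0:ℝ) T, t ^ (-(1/2) : ℝ) := by
      refine setIntegral_congr_fun measurableSet_Ioc (fun x hx => ?_)
      rw [Real.rpow_neg hx.1.le, ← Real.sqrt_eq_rpow]
    rw [hcong, ← intervalIntegral.integral_of_le hT.le,
      integral_rpow (Or.inl (by norm_num))]
    rw [show -(1/2) + 1 = (1/2 : ℝ) by norm_num, Real.zero_rpow (by norm_num),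
      ← Real.sqrt_eq_rpow]
    ring
  rw [hval]
  ring_nf
  rfl

theorem Iint_estimate (T : ℝ) (hT : 0 < T) (ε : ℝ) (hε0 : 0 < ε) (hε2 : ε < 2) :
    Iint T ≤ -2 * T * Real.log (1 - ε / 2) + 3 / ε ^ 2 := by
  have h1 : 0 < 1 - ε / 2 := by linarith
  set L : ℝ := -2 * Real.log (1 - ε / 2) with hL_def
  have hlogle : Real.log (1 - ε / 2) ≤ -ε / 2 := by
    have := Real.log_le_sub_one_of_pos h1
    linarith
  have hLε : ε ≤ L := by rw [hL_def]; linarith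
  have hLpos : 0 < L := lt_of_lt_of_le hε0 hLε
  have hRHS : -2 * T * Real.log (1 - ε / 2) + 3 / ε ^ 2 = L * T + 3 / ε ^ 2 := by
    rw [hL_def]; ring
  rw [hRHS]
  rcases le_or_gt ε (3/2) with hcase | hcase
  · -- small ε : use the sqrt bound
    have hmain := Iint_le_sqrt T hT
    set u : ℝ := Real.sqrt (2 * T) with hu_def
    have hu2 : u ^ 2 = 2 * T := Real.sq_sqrt (by linarith)
    have hu0 : 0 ≤ u := Real.sqrt_nonneg _
    have hu_eq : 2 * Real.sqrt 2 * Real.sqrt T = 2 * u := by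
      rw [hu_def, Real.sqrt_mul (by norm_num) T]; ring
    have key : 2 * u ≤ L * T + 2 / L := by
      have hq : L * (L * T + 2 / L - 2 * u) = L ^ 2 * T + 2 - 2 * L * u := by
        field_simp
      have hL2T : L ^ 2 * u ^ 2 = 2 * T * L ^ 2 := by rw [hu2]; ring
      have h5 : 0 ≤ L * (L * T + 2 / L - 2 * u) := by
        rw [hq]; nlinarith [sq_nonneg (L * u - 2)]
      by_contra hcon
      push_neg at hcon
      nlinarith [mul_pos hLpos (by linarith : 0 < 2 * u - (L * T + 2 / L))]
    have h6 : 2 / L ≤ 2 / ε := by gcongr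
    have h7 : 2 / ε ≤ 3 / ε ^ 2 := by
      rw [div_le_div_iff₀ hε0 (by positivity)]
      nlinarith
    linarith [hmain, hu_eq ▸ hmain]
  · -- large ε : use the log 2 bound
    have hmain := Iint_le_log2 T hT
    have hlog2 : Real.log (1 - ε / 2) ≤ Real.log (4⁻¹) := by
      apply Real.log_le_log h1
      linarith
    have h4 : Real.log (4⁻¹ : ℝ) = -(2 * Real.log 2) := by
      rw [Real.log_inv, show (4:ℝ) = 2 ^ 2 by norm_num, Real.log_pow]
      push_cast; ring
    have hlog2pos : 0 < Real.log 2 := Real.log_pos (by norm_num)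
    have hL4 : Real.log 2 ≤ L := by
      rw [hL_def]; rw [h4] at hlog2; linarith
    have h8 : 0 < 3 / ε ^ 2 := by positivity
    nlinarith [hmain, mul_le_mul_of_nonneg_left hL4 hT.le]
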